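/- For every integer k ≥ 4, there exists a coalition partition Ψ of the path P_k with exactly two parts, and the corresponding coalition graph CG(P_k, Ψ) is isomorphic to K_2. -/

import Mathlib

open SimpleGraph

attribute [local instance] Classical.propDecidable

def Dominates {V : Type*} (G : SimpleGraph V) (S : Set V) : Prop :=
  ∀ v, v ∉ S → ∃ u ∈ S, G.Adj u v

def Coalition {V : Type*} (G : SimpleGraph V) (A B : Set V) : Prop :=
  Disjoint A B ∧ ¬ Dominates G A ∧ ¬ Dominates G B ∧ Dominates G (A ∪ B)

def IsCoalitionPartition {V : Type*} (G : SimpleGraph V) (P : Finset (Set V)) : Prop :=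
  (∀ A ∈ P, A.Nonempty) ∧
  (∀ A ∈ P, ∀ B ∈ P, A ≠ B → Disjoint A B) ∧
  (∀ v : V, ∃ A ∈ P, v ∈ A) ∧
  (∀ A ∈ P, (Dominates G A ∧ ∃ v, A = {v}) ∨
    (¬ Dominates G A ∧ ∃ B ∈ P, B ≠ A ∧ Coalition G A B))

noncomputable def coalitionNumber {V : Type*} (G : SimpleGraph V) : ℕ :=
  sSup {n | ∃ P : Finset (Set V), IsCoalitionPartition G P ∧ P.card = n}

def coalitionGraph {V : Type*} (G : SimpleGraph V) (P : Finset (Set V)) :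
    SimpleGraph {A : Set V // A ∈ P} where
  Adj A B := Coalition G A.1 B.1
  symm := by
    constructor
    rintro A B ⟨d, na, nb, u⟩
    exact ⟨d.symm, nb, na, by rwa [Set.union_comm]⟩
  loopless := by
    constructor
    rintro ⟨A, hA⟩ ⟨d, na, nb, u⟩
    rw [Set.union_self] at u
    exact na u

theorem stmt11 (k : ℕ) (hk : 4 ≤ k) :
    ∃ P : Finset (Set (Fin k)),
      IsCoalitionPartition (SimpleGraph.pathGraph k) P ∧ P.card = 2 ∧
      Nonempty ((coalitionGraph (SimpleGraph.pathGraph k) P) ≃g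
        (⊤ : SimpleGraph (Fin 2))) := by
  set A : Set (Fin k) := {i | i.val ≤ 1} with hA
  set B : Set (Fin k) := {i | 2 ≤ i.val} with hB
  have hAB : A ≠ B := by
    intro h
    have h0 : (⟨0, by omega⟩ : Fin k) ∈ A := by simp [hA]
    rw [h] at h0
    simp [hB] at h0
  have hdisj : Disjoint A B := by
    rw [Set.disjoint_left]
    intro i hi hi'
    simp [hA] at hi; simp [hB] at hi'; omega
  have hcover : ∀ v : Fin k, v ∈ A ∨ v ∈ B := by
    intro v; simp [hA, hB]; omega
  have hnA : ¬ Dominates (SimpleGraph.pathGraph k) A := by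
    intro h
    obtain ⟨u, hu, hadj⟩ := h ⟨3, by omega⟩ (by simp [hA])
    rw [SimpleGraph.pathGraph_adj] at hadj
    simp only [Fin.val_mk] at hadj
    simp [hA] at hu
    omega
  have hnB : ¬ Dominates (SimpleGraph.pathGraph k) B := by
    intro h
    obtain ⟨u, hu, hadj⟩ := h ⟨0, by omega⟩ (by simp [hB])
    rw [SimpleGraph.pathGraph_adj] at hadj
    simp only [Fin.val_mk] at hadj
    simp [hB] at hu
    omega
  have hdU : Dominates (SimpleGraph.pathGraph k) (A ∪ B) := by
    intro v hv
    exact absurd ((hcover v).elim Or.inl Or.inr) hv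
  have hcoAB : Coalition (SimpleGraph.pathGraph k) A B := ⟨hdisj, hnA, hnB, hdU⟩
  have hcoBA : Coalition (SimpleGraph.pathGraph k) B A :=
    ⟨hdisj.symm, hnB, hnA, by rwa [Set.union_comm]⟩
  refine ⟨{A, B}, ⟨?_, ?_, ?_, ?_⟩, ?_, ?_⟩
  · rintro X hX
    rcases Finset.mem_insert.mp hX with h | h
    · exact ⟨⟨0, by omega⟩, by simp [h, hA]⟩
    · exact ⟨⟨2, by omega⟩, by simp [Finset.mem_singleton.mp h, hB]⟩
  · rintro X hX Y hY hne
    rcases Finset.mem_insert.mp hX with h | h <;>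
      rcases Finset.mem_insert.mp hY with h' | h' <;>
      simp_all [Finset.mem_singleton] <;> first
        | exact hdisj | exact hdisj.symm
  · intro v
    rcases hcover v with h | h
    · exact ⟨A, by simp, h⟩
    · exact ⟨B, by simp, h⟩
  · rintro X hX
    rcases Finset.mem_insert.mp hX with h | h
    · exact Or.inr ⟨h ▸ hnA, B, by simp, h ▸ hAB.symm, h ▸ hcoAB⟩
    · rw [Finset.mem_singleton] at h
      exact Or.inr ⟨h ▸ hnB, A, by simp, h ▸ hAB, h ▸ hcoBA⟩
  · rw [Finset.card_insert_of_notMem (by simpa using hAB), Finset.card_singleton]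
  · refine ⟨⟨⟨fun X => if X.1 = A then 0 else 1, fun i => if i = 0 then ⟨A, by simp⟩ else ⟨B, by simp⟩, ?_, ?_⟩, ?_⟩⟩
    · rintro ⟨X, hX⟩
      rcases Finset.mem_insert.mp hX with h | h
      · simp [h]
      · rw [Finset.mem_singleton] at h
        simp [h, hAB.symm]
    · intro i
      fin_cases i
      · simp
      · simp [hAB.symm]
    · rintro ⟨X, hX⟩ ⟨Y, hY⟩
      have hnAA : ¬ Coalition (SimpleGraph.pathGraph k) A A := fun c => c.2.1 (by
        have := c.2.2.2; rwa [Set.union_self] at this)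
      have hnBB : ¬ Coalition (SimpleGraph.pathGraph k) B B := fun c => c.2.1 (by
        have := c.2.2.2; rwa [Set.union_self] at this)
      rcases Finset.mem_insert.mp hX with h | h <;>
        rcases Finset.mem_insert.mp hY with h' | h' <;>
        (try simp only [Finset.mem_singleton] at h) <;> (try simp only [Finset.mem_singleton] at h') <;> subst h <;> subst h' <;>
        simp [coalitionGraph, SimpleGraph.top_adj, hAB, hAB.symm, hcoAB, hcoBA, hnAA, hnBB]
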